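/- Let f : ℂ → ℂᴺ be holomorphic and nowhere vanishing, and let P(ξ) = (f(ξ)·f(ξ)†)/(f(ξ)†·f(ξ)), viewed as a smooth map ℝ² → Matrix (Fin N) (Fin N) ℂ via ξ₊ = x + iy. Then the map F := −i·(P − (1/N)·I) satisfies ∂₊F = −i[∂₊P, P] and ∂₋F = i[∂₋P, P] at every point; i.e., F is an explicit integrated form of the Generalized Weierstrass immersion associated with the holomorphic solution P, F takes values in the skew-Hermitian traceless matrices (Fᴴ = −F, tr F = 0). -/

import Mathlib

open Matrix

noncomputable section

attribute [local instance] Matrix.normedAddCommGroup Matrix.normedSpace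

/-- The Wirtinger derivative `∂₊ = ½(∂/∂x − i ∂/∂y)` of a matrix-valued map on `ℝ²`. -/
def dp {N : ℕ} (P : ℝ × ℝ → Matrix (Fin N) (Fin N) ℂ) (p : ℝ × ℝ) :
    Matrix (Fin N) (Fin N) ℂ :=
  (2 : ℂ)⁻¹ • (fderiv ℝ P p (1, 0) - Complex.I • fderiv ℝ P p (0, 1))

/-- The Wirtinger derivative `∂₋ = ½(∂/∂x + i ∂/∂y)` of a matrix-valued map on `ℝ²`. -/
def dm {N : ℕ} (P : ℝ × ℝ → Matrix (Fin N) (Fin N) ℂ) (p : ℝ × ℝ) :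
    Matrix (Fin N) (Fin N) ℂ :=
  (2 : ℂ)⁻¹ • (fderiv ℝ P p (1, 0) + Complex.I • fderiv ℝ P p (0, 1))


/-- The rank-one Hermitian projector `P = (f·f†)/(f†·f)` associated to a vector-valued map
`f : ℂ → ℂᴺ`, viewed as a map on `ℝ²` via `ξ₊ = x + iy`. -/
def projOf {N : ℕ} (f : ℂ → (Fin N → ℂ)) (p : ℝ × ℝ) : Matrix (Fin N) (Fin N) ℂ :=
  (star (f ((p.1 : ℂ) + (p.2 : ℂ) * Complex.I)) ⬝ᵥ f ((p.1 : ℂ) + (p.2 : ℂ) * Complex.I))⁻¹ •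
    vecMulVec (f ((p.1 : ℂ) + (p.2 : ℂ) * Complex.I))
      (star (f ((p.1 : ℂ) + (p.2 : ℂ) * Complex.I)))

namespace GWaux

variable {N : ℕ}

lemma vecMulVec_mul_vecMulVec (u v w x : Fin N → ℂ) :
    vecMulVec u v * vecMulVec w x = (v ⬝ᵥ w) • vecMulVec u x := by
  ext i j
  simp only [Matrix.mul_apply, vecMulVec_apply, dotProduct, Matrix.smul_apply, smul_eq_mul]
  rw [Finset.sum_mul]
  exact Finset.sum_congr rfl fun k _ => by ring

lemma trace_vecMulVec (u v : Fin N → ℂ) : (vecMulVec u v).trace = u ⬝ᵥ v := by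
  simp [Matrix.trace, Matrix.diag, vecMulVec_apply, dotProduct]

lemma conjTranspose_vecMulVec (u v : Fin N → ℂ) :
    (vecMulVec u v)ᴴ = vecMulVec (star v) (star u) := by
  ext i j
  simp [conjTranspose_apply, vecMulVec_apply, mul_comm]

lemma vecMulVec_smul_left (r : ℂ) (u v : Fin N → ℂ) :
    vecMulVec (r • u) v = r • vecMulVec u v := by
  ext i j
  simp [vecMulVec_apply, mul_assoc]

lemma vecMulVec_smul_right (r : ℂ) (u v : Fin N → ℂ) :
    vecMulVec u (r • v) = r • vecMulVec u v := by
  ext i j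
  simp only [vecMulVec_apply, Pi.smul_apply, Matrix.smul_apply, smul_eq_mul]
  ring

/-- The dot product as a continuous bilinear map over `ℝ`. -/
def dotL (N : ℕ) : (Fin N → ℂ) →L[ℝ] (Fin N → ℂ) →L[ℝ] ℂ :=
  LinearMap.toContinuousLinearMap
  { toFun := fun u => LinearMap.toContinuousLinearMap
      { toFun := fun v => u ⬝ᵥ v
        map_add' := fun v w => dotProduct_add u v w
        map_smul' := fun r v => by simp }
    map_add' := fun u u' => by
      ext v
      simp [LinearMap.coe_toContinuousLinearMap', add_dotProduct]
    map_smul' := fun r u => by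
      ext v
      simp [LinearMap.coe_toContinuousLinearMap', smul_dotProduct] }

@[simp] lemma dotL_apply (u v : Fin N → ℂ) : dotL N u v = u ⬝ᵥ v := rfl

/-- The outer product as a continuous bilinear map over `ℝ`. -/
def vmvL (N : ℕ) : (Fin N → ℂ) →L[ℝ] (Fin N → ℂ) →L[ℝ] Matrix (Fin N) (Fin N) ℂ :=
  LinearMap.toContinuousLinearMap
  { toFun := fun u => LinearMap.toContinuousLinearMap
      { toFun := fun v => vecMulVec u v
        map_add' := fun v w => by ext i j; simp [vecMulVec_apply, mul_add]
        map_smul' := fun r v => by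
          ext i j
          simp only [vecMulVec_apply, Pi.smul_apply, Matrix.smul_apply, RingHom.id_apply,
            smul_eq_mul, Complex.real_smul]
          ring }
    map_add' := fun u u' => by
      ext v i j
      simp [LinearMap.coe_toContinuousLinearMap', vecMulVec_apply, add_mul]
    map_smul' := fun r u => by
      ext v i j
      simp only [LinearMap.coe_toContinuousLinearMap', LinearMap.coe_mk, AddHom.coe_mk,
        vecMulVec_apply, Pi.smul_apply, ContinuousLinearMap.coe_smul', RingHom.id_apply,
        Matrix.smul_apply, smul_eq_mul, Complex.real_smul]
      ring }

@[simp] lemma vmvL_apply (u v : Fin N → ℂ) : vmvL N u v = vecMulVec u v := rfl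

/-- The entrywise star as a continuous `ℝ`-linear map. -/
def starCLM (N : ℕ) : (Fin N → ℂ) →L[ℝ] (Fin N → ℂ) :=
  LinearMap.toContinuousLinearMap
  { toFun := star
    map_add' := star_add
    map_smul' := fun r v => by simp [star_smul] }

@[simp] lemma starCLM_apply (v : Fin N → ℂ) : starCLM N v = star v := rfl

end GWaux

open GWaux in
/-- For the projector `P` associated to a nowhere-vanishing holomorphic `f : ℂ → ℂᴺ`, the map
`F = −i·(P − (1/N)·I)` is an integrated form of the Generalized Weierstrass immersion:
`∂₊F = −i[∂₊P, P]`, `∂₋F = i[∂₋P, P]`, and `F` is skew-Hermitian and traceless. -/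
theorem integrated_GW_immersion_holomorphic {N : ℕ} (f : ℂ → (Fin N → ℂ))
    (hf : Differentiable ℂ f) (hf0 : ∀ ξ, f ξ ≠ 0)
    (P : ℝ × ℝ → Matrix (Fin N) (Fin N) ℂ) (hPdef : P = projOf f)
    (F : ℝ × ℝ → Matrix (Fin N) (Fin N) ℂ)
    (hF : F = fun p => (-Complex.I) • (P p - ((N : ℂ))⁻¹ • (1 : Matrix (Fin N) (Fin N) ℂ))) :
    ∀ p, dp F p = (-Complex.I) • (dp P p * P p - P p * dp P p)
      ∧ dm F p = Complex.I • (dm P p * P p - P p * dm P p)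
      ∧ (F p)ᴴ = -F p
      ∧ (F p).trace = 0 := by
  classical
  rcases eq_or_ne N 0 with hN | hN
  · subst hN
    exact absurd (Subsingleton.elim (f 0) 0) (hf0 0)
  intro p
  set Lξ : ℝ × ℝ →L[ℝ] ℂ :=
    ((ContinuousLinearMap.fst ℝ ℝ ℝ).smulRight (1 : ℂ)) +
      ((ContinuousLinearMap.snd ℝ ℝ ℝ).smulRight Complex.I) with hLξ
  have hξfun : (fun q : ℝ × ℝ => (q.1 : ℂ) + (q.2 : ℂ) * Complex.I) = fun q => Lξ q := by
    funext q
    simp [hLξ, Complex.real_smul]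
  have hξ : HasFDerivAt (fun q : ℝ × ℝ => (q.1 : ℂ) + (q.2 : ℂ) * Complex.I) Lξ p := by
    rw [hξfun]; exact Lξ.hasFDerivAt
  set z : ℂ := (p.1 : ℂ) + (p.2 : ℂ) * Complex.I with hz
  set Dg : ℝ × ℝ →L[ℝ] (Fin N → ℂ) := ((fderiv ℂ f z).restrictScalars ℝ).comp Lξ with hDg
  have hg : HasFDerivAt (fun q : ℝ × ℝ => f ((q.1 : ℂ) + (q.2 : ℂ) * Complex.I)) Dg p :=
    (((hf z).hasFDerivAt).restrictScalars ℝ).comp p hξ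
  have hsg : HasFDerivAt (fun q : ℝ × ℝ => star (f ((q.1 : ℂ) + (q.2 : ℂ) * Complex.I)))
      ((starCLM N).comp Dg) p := ((starCLM N).hasFDerivAt).comp p hg
  set u : Fin N → ℂ := f z with hu
  have hMd : HasFDerivAt
      (fun q : ℝ × ℝ => vecMulVec (f ((q.1 : ℂ) + (q.2 : ℂ) * Complex.I))
        (star (f ((q.1 : ℂ) + (q.2 : ℂ) * Complex.I))))
      ((vmvL N).precompR (ℝ × ℝ) u ((starCLM N).comp Dg) + (vmvL N).precompL (ℝ × ℝ) Dg (star u))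
      p := (vmvL N).hasFDerivAt_of_bilinear hg hsg
  have hsd : HasFDerivAt
      (fun q : ℝ × ℝ => star (f ((q.1 : ℂ) + (q.2 : ℂ) * Complex.I)) ⬝ᵥ
        f ((q.1 : ℂ) + (q.2 : ℂ) * Complex.I))
      ((dotL N).precompR (ℝ × ℝ) (star u) Dg + (dotL N).precompL (ℝ × ℝ) ((starCLM N).comp Dg) u)
      p := (dotL N).hasFDerivAt_of_bilinear hsg hg
  set s : ℂ := star u ⬝ᵥ u with hs
  have hs0 : s ≠ 0 := by
    open scoped ComplexOrder in
    exact fun h => hf0 z (dotProduct_star_self_eq_zero.mp h)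
  have hinv : HasFDerivAt
      (fun q : ℝ × ℝ => (star (f ((q.1 : ℂ) + (q.2 : ℂ) * Complex.I)) ⬝ᵥ
        f ((q.1 : ℂ) + (q.2 : ℂ) * Complex.I))⁻¹)
      ((-(ContinuousLinearMap.mulLeftRight ℝ ℂ s⁻¹ s⁻¹)).comp
        ((dotL N).precompR (ℝ × ℝ) (star u) Dg + (dotL N).precompL (ℝ × ℝ) ((starCLM N).comp Dg) u))
      p := (hasFDerivAt_inv' hs0).comp p hsd
  have hP' : HasFDerivAt P
      (@id (ℝ × ℝ →L[ℝ] Matrix (Fin N) (Fin N) ℂ) (s⁻¹ • ((vmvL N).precompR (ℝ × ℝ) u ((starCLM N).comp Dg) +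
        (vmvL N).precompL (ℝ × ℝ) Dg (star u))) +
       @id (ℝ × ℝ →L[ℝ] Matrix (Fin N) (Fin N) ℂ) (((-(ContinuousLinearMap.mulLeftRight ℝ ℂ s⁻¹ s⁻¹)).comp
        ((dotL N).precompR (ℝ × ℝ) (star u) Dg +
          (dotL N).precompL (ℝ × ℝ) ((starCLM N).comp Dg) u)).smulRight (vecMulVec u (star u))))
      p := by
    rw [hPdef]
    exact hinv.smul hMd
  have hfP := hP'.fderiv
  have hkey : ∀ v, fderiv ℝ P p v = s⁻¹ • (vecMulVec u (star (Dg v)) + vecMulVec (Dg v) (star u)) +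
      (-(s⁻¹ * (star u ⬝ᵥ Dg v + star (Dg v) ⬝ᵥ u) * s⁻¹)) • vecMulVec u (star u) := fun v => by
    rw [hfP]; rfl
  set c : Fin N → ℂ := fderiv ℂ f z 1 with hc
  have hDgv : ∀ v : ℝ × ℝ, Dg v = (Lξ v) • c := by
    intro v
    rw [hDg]
    simp only [ContinuousLinearMap.comp_apply, ContinuousLinearMap.coe_restrictScalars']
    conv_lhs => rw [show Lξ v = (Lξ v) • (1 : ℂ) by simp]
    rw [_root_.map_smul]
  have hL1 : Lξ (1, 0) = 1 := by simp [hLξ]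
  have hL2 : Lξ (0, 1) = Complex.I := by simp [hLξ]
  set G : Matrix (Fin N) (Fin N) ℂ := vecMulVec u (star c) with hG
  set C : Matrix (Fin N) (Fin N) ℂ := vecMulVec c (star u) with hC
  set Mm : Matrix (Fin N) (Fin N) ℂ := vecMulVec u (star u) with hMm
  set a : ℂ := star c ⬝ᵥ u with ha
  set b : ℂ := star u ⬝ᵥ c with hb
  have e1 : fderiv ℝ P p (1, 0) = s⁻¹ • (G + C) + (-(s⁻¹ * (b + a) * s⁻¹)) • Mm := by
    rw [hkey]
    simp only [id, ContinuousLinearMap.add_apply, ContinuousLinearMap.smul_apply,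
      ContinuousLinearMap.smulRight_apply, ContinuousLinearMap.comp_apply,
      ContinuousLinearMap.precompR_apply, ContinuousLinearMap.precompL_apply,
      ContinuousLinearMap.neg_apply, ContinuousLinearMap.mulLeftRight_apply,
      ContinuousLinearMap.compL_apply,
      vmvL_apply, dotL_apply, starCLM_apply, hDgv, hL1, hL2, one_smul]
    rfl
  have e2 : fderiv ℝ P p (0, 1) =
      s⁻¹ • ((-Complex.I) • G + Complex.I • C) +
        (-(s⁻¹ * (Complex.I * b + -Complex.I * a) * s⁻¹)) • Mm := by
    rw [hkey]
    simp only [id, ContinuousLinearMap.add_apply, ContinuousLinearMap.smul_apply,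
      ContinuousLinearMap.smulRight_apply, ContinuousLinearMap.comp_apply,
      ContinuousLinearMap.precompR_apply, ContinuousLinearMap.precompL_apply,
      ContinuousLinearMap.neg_apply, ContinuousLinearMap.mulLeftRight_apply,
      ContinuousLinearMap.compL_apply,
      vmvL_apply, dotL_apply, starCLM_apply, hDgv, hL1, hL2, one_smul, star_smul,
      Complex.star_def, Complex.conj_I, vecMulVec_smul_left, vecMulVec_smul_right,
      dotProduct_smul, smul_dotProduct, smul_eq_mul]
    rfl
  have hdp : dp P p = s⁻¹ • C + (-(s⁻¹ * b * s⁻¹)) • Mm := by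
    unfold dp
    rw [e1, e2]
    match_scalars
    · linear_combination ((2 : ℂ)⁻¹ * s⁻¹) * Complex.I_mul_I
    · linear_combination (-(2 : ℂ)⁻¹ * s⁻¹) * Complex.I_mul_I
    · linear_combination ((2 : ℂ)⁻¹ * s⁻¹ * s⁻¹ * (b - a)) * Complex.I_mul_I
  have hdm : dm P p = s⁻¹ • G + (-(s⁻¹ * a * s⁻¹)) • Mm := by
    unfold dm
    rw [e1, e2]
    match_scalars
    · linear_combination (-(2 : ℂ)⁻¹ * s⁻¹) * Complex.I_mul_I
    · linear_combination ((2 : ℂ)⁻¹ * s⁻¹) * Complex.I_mul_I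
    · linear_combination ((2 : ℂ)⁻¹ * s⁻¹ * s⁻¹ * (a - b)) * Complex.I_mul_I
  have hPp : P p = s⁻¹ • Mm := by rw [hPdef]; rfl
  have hMmMm : Mm * Mm = s • Mm := by
    rw [hMm, GWaux.vecMulVec_mul_vecMulVec, ← hs]
  have hCMm : C * Mm = s • C := by
    rw [hC, hMm, GWaux.vecMulVec_mul_vecMulVec, ← hs, ← hC]
  have hMmC : Mm * C = b • Mm := by
    rw [hC, hMm, GWaux.vecMulVec_mul_vecMulVec, ← hb, ← hMm]
  have hGMm : G * Mm = a • Mm := by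
    rw [hG, hMm, GWaux.vecMulVec_mul_vecMulVec, ← ha, ← hMm]
  have hMmG : Mm * G = s • G := by
    rw [hG, hMm, GWaux.vecMulVec_mul_vecMulVec, ← hs, ← hG]
  have hA : dp P p * P p = dp P p := by
    rw [hdp, hPp]
    rw [add_mul, smul_mul_assoc, smul_mul_assoc, mul_smul_comm, mul_smul_comm, hCMm, hMmMm]
    match_scalars <;> field_simp
  have hB : P p * dp P p = 0 := by
    rw [hdp, hPp]
    rw [mul_add, mul_smul_comm, mul_smul_comm, smul_mul_assoc, smul_mul_assoc, hMmC, hMmMm]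
    match_scalars
    field_simp
    ring
  have hCm : dm P p * P p = 0 := by
    rw [hdm, hPp]
    rw [add_mul, smul_mul_assoc, smul_mul_assoc, mul_smul_comm, mul_smul_comm, hGMm, hMmMm]
    match_scalars
    field_simp
    ring
  have hD : P p * dm P p = dm P p := by
    rw [hdm, hPp]
    rw [mul_add, mul_smul_comm, mul_smul_comm, smul_mul_assoc, smul_mul_assoc, hMmG, hMmMm]
    match_scalars <;> field_simp
  have hP2 : HasFDerivAt P (fderiv ℝ P p) p := hfP ▸ hP'
  have hdF : fderiv ℝ F p = (-Complex.I) • fderiv ℝ P p := by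
    rw [hF]
    exact (((hP2.sub_const (((N : ℂ))⁻¹ • (1 : Matrix (Fin N) (Fin N) ℂ))).const_smul
      (-Complex.I)).fderiv)
  have hdpF : dp F p = (-Complex.I) • dp P p := by
    unfold dp
    rw [hdF]
    simp only [ContinuousLinearMap.smul_apply]
    module
  have hdmF : dm F p = (-Complex.I) • dm P p := by
    unfold dm
    rw [hdF]
    simp only [ContinuousLinearMap.smul_apply]
    module
  have hsstar : star s = s := by
    rw [hs, ← Matrix.star_dotProduct]
  refine ⟨?_, ?_, ?_, ?_⟩
  · rw [hdpF, hA, hB, sub_zero]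
  · rw [hdmF, hCm, hD, zero_sub, smul_neg, ← neg_smul]
  · have hPh : (P p)ᴴ = P p := by
      rw [hPp, Matrix.conjTranspose_smul, hMm, GWaux.conjTranspose_vecMulVec, star_star, star_inv₀,
        hsstar]
    rw [hF]
    simp [Matrix.conjTranspose_smul, Matrix.conjTranspose_sub, Matrix.conjTranspose_one, hPh,
      Complex.star_def, Complex.conj_I, map_inv₀, neg_smul]
  · rw [hF]
    simp only [Matrix.trace_smul, Matrix.trace_sub, Matrix.trace_one, smul_eq_mul]
    rw [hPp]
    simp only [Matrix.trace_smul, hMm, GWaux.trace_vecMulVec, smul_eq_mul]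
    rw [dotProduct_comm, ← hs, inv_mul_cancel₀ hs0]
    have : ((Fintype.card (Fin N) : ℂ)) = (N : ℂ) := by simp
    rw [show (Fintype.card (Fin N) : ℂ) = (N : ℂ) by simp]
    rw [inv_mul_cancel₀ (Nat.cast_ne_zero.mpr hN : (N : ℂ) ≠ 0)]
    simp
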